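/- arXiv:1402.2999 — 6 statements merged into one kernel-verified Lean document; each statement's English description precedes it below -/
import Mathlib

section
/- Let Y be a compact metric space and φ : Y × ℝⁿ → ℝ be such that (1) for every y ∈ Y the function x ↦ φ(y,x) is convex, and (2) for every x ∈ ℝⁿ the function y ↦ φ(y,x) is upper semicontinuous. Define Φ(x) = sup_{y ∈ Y} φ(y,x) and assume Φ is finite in a neighborhood of a point x (so that its subdifferential at x is nonempty and compact). Then the subdifferential of Φ at x equals the closed convex hull of the union over y ∈ Y(x) of the subdifferentials of φ(y,·) at x, where Y(x) = { y ∈ Y : φ(y,x) = Φ(x) } and the subdifferential of a convex function h at x is the set { v ∈ ℝⁿ : ∀ z, h(z) ≥ h(x) + ⟨v, z − x⟩ }. -/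
open scoped RealInnerProductSpace

open Set Filter

section helpers

variable {E : Type*} [NormedAddCommGroup E] [InnerProductSpace ℝ E]

/-- Difference quotient of a convex function. -/
noncomputable def dq (ψ : E → ℝ) (x u : E) (t : ℝ) : ℝ := (ψ (x + t • u) - ψ x) / t

lemma dq_mono {ψ : E → ℝ} (hψ : ConvexOn ℝ Set.univ ψ) (x u : E) {s t : ℝ}
    (hs : 0 < s) (hst : s ≤ t) : dq ψ x u s ≤ dq ψ x u t := by
  have ht : 0 < t := hs.trans_le hst
  have ha : (0:ℝ) ≤ s / t := by positivity
  have hb : (0:ℝ) ≤ 1 - s / t := by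
    have : s / t ≤ 1 := (div_le_one ht).2 hst
    linarith
  have hab : s / t + (1 - s / t) = 1 := by ring
  have key := hψ.2 (mem_univ (x + t • u)) (mem_univ x) ha hb hab
  have hpt : (s / t) • (x + t • u) + (1 - s / t) • x = x + s • u := by
    rw [smul_add, smul_smul, div_mul_cancel₀ _ ht.ne']
    module
  rw [hpt] at key
  simp only [smul_eq_mul] at key
  have key2 : t * ψ (x + s • u) ≤ s * ψ (x + t • u) + (t - s) * ψ x := by
    have h3 := mul_le_mul_of_nonneg_left key ht.le
    calc t * ψ (x + s • u) ≤ t * (s / t * ψ (x + t • u) + (1 - s / t) * ψ x) := h3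
      _ = s * ψ (x + t • u) + (t - s) * ψ x := by field_simp
  rw [dq, dq, div_le_div_iff₀ hs ht]
  linarith

lemma dq_lb {ψ : E → ℝ} (hψ : ConvexOn ℝ Set.univ ψ) (x u : E) {t : ℝ} (ht : 0 < t) :
    ψ x - ψ (x - u) ≤ dq ψ x u t := by
  have h1 : (0:ℝ) < t + 1 := by linarith
  have ha : (0:ℝ) ≤ t / (t + 1) := by positivity
  have hb : (0:ℝ) ≤ 1 / (t + 1) := by positivity
  have hab : t / (t + 1) + 1 / (t + 1) = 1 := by field_simp
  have key := hψ.2 (mem_univ (x - u)) (mem_univ (x + t • u)) ha hb hab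
  have hpt : (t / (t + 1)) • (x - u) + (1 / (t + 1)) • (x + t • u) = x := by
    match_scalars <;> field_simp <;> ring
  rw [hpt] at key
  simp only [smul_eq_mul] at key
  have key2 : (t + 1) * ψ x ≤ t * ψ (x - u) + ψ (x + t • u) := by
    have h3 := mul_le_mul_of_nonneg_left key h1.le
    calc (t + 1) * ψ x ≤ (t + 1) * (t / (t + 1) * ψ (x - u) + 1 / (t + 1) * ψ (x + t • u)) := h3
      _ = t * ψ (x - u) + ψ (x + t • u) := by field_simp
  rw [dq, le_div_iff₀ ht]
  linarith

end helpers
section helpers2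

variable {E : Type*} [NormedAddCommGroup E] [InnerProductSpace ℝ E]

/-- Directional derivative (as an infimum of difference quotients). -/
noncomputable def ddq (ψ : E → ℝ) (x u : E) : ℝ := sInf (dq ψ x u '' Set.Ioi 0)

variable {ψ : E → ℝ} (hψ : ConvexOn ℝ Set.univ ψ) (x : E)

include hψ

lemma ddq_bddBelow (u : E) : BddBelow (dq ψ x u '' Set.Ioi 0) :=
  ⟨ψ x - ψ (x - u), by rintro _ ⟨t, ht, rfl⟩; exact dq_lb hψ x u ht⟩

omit hψ in
lemma ddq_nonempty (u : E) : (dq ψ x u '' Set.Ioi 0).Nonempty :=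
  ⟨dq ψ x u 1, 1, mem_Ioi.2 one_pos, rfl⟩

lemma ddq_le (u : E) {t : ℝ} (ht : 0 < t) : ddq ψ x u ≤ dq ψ x u t :=
  csInf_le (ddq_bddBelow hψ x u) ⟨t, ht, rfl⟩

omit hψ in
lemma le_ddq (u : E) {a : ℝ} (ha : ∀ t, 0 < t → a ≤ dq ψ x u t) : a ≤ ddq ψ x u :=
  le_csInf (ddq_nonempty x u) (by rintro _ ⟨t, ht, rfl⟩; exact ha t ht)

omit hψ in
lemma dq_smul {c : ℝ} (hc : 0 < c) (u : E) {t : ℝ} (ht : 0 < t) :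
    dq ψ x (c • u) t = c * dq ψ x u (t * c) := by
  rw [dq, dq, smul_smul]
  field_simp

lemma smul_ddq_le {c : ℝ} (hc : 0 < c) (u : E) :
    c * ddq ψ x u ≤ ddq ψ x (c • u) := by
  refine le_ddq x _ fun t ht => ?_
  rw [dq_smul x hc u ht]
  exact mul_le_mul_of_nonneg_left (ddq_le hψ x u (by positivity)) hc.le

lemma ddq_smul {c : ℝ} (hc : 0 < c) (u : E) :
    ddq ψ x (c • u) = c * ddq ψ x u := by
  refine le_antisymm ?_ (smul_ddq_le hψ x hc u)
  have h := smul_ddq_le hψ x (inv_pos.2 hc) (c • u)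
  rw [smul_smul, inv_mul_cancel₀ hc.ne', one_smul] at h
  calc ddq ψ x (c • u) = c * (c⁻¹ * ddq ψ x (c • u)) := by field_simp
    _ ≤ c * ddq ψ x u := mul_le_mul_of_nonneg_left h hc.le

lemma ddq_add_le (u v : E) : ddq ψ x (u + v) ≤ ddq ψ x u + ddq ψ x v := by
  have step : ∀ s s', 0 < s → 0 < s' → ddq ψ x (u + v) ≤ dq ψ x u s + dq ψ x v s' := by
    intro s s' hs hs'
    set t : ℝ := min s s' / 2 with htdef
    have ht : 0 < t := by positivity
    have h2ts : 2 * t ≤ s := by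
      have := min_le_left s s'; rw [htdef]; linarith
    have h2ts' : 2 * t ≤ s' := by
      have := min_le_right s s'; rw [htdef]; linarith
    have key := hψ.2 (mem_univ (x + (2 * t) • u)) (mem_univ (x + (2 * t) • v))
      (by norm_num : (0:ℝ) ≤ 1/2) (by norm_num : (0:ℝ) ≤ 1/2) (by norm_num)
    have hpt : ((1:ℝ)/2) • (x + (2 * t) • u) + ((1:ℝ)/2) • (x + (2 * t) • v)
        = x + t • (u + v) := by
      match_scalars <;> ring
    rw [hpt] at key
    simp only [smul_eq_mul] at key
    have mid : dq ψ x (u + v) t ≤ dq ψ x u (2 * t) + dq ψ x v (2 * t) := by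
      rw [dq, dq, dq, ← add_div, div_le_div_iff₀ ht (by positivity)]
      nlinarith [key]
    calc ddq ψ x (u + v) ≤ dq ψ x (u + v) t := ddq_le hψ x _ ht
      _ ≤ dq ψ x u (2 * t) + dq ψ x v (2 * t) := mid
      _ ≤ dq ψ x u s + dq ψ x v s' :=
        add_le_add (dq_mono hψ x u (by positivity) h2ts) (dq_mono hψ x v (by positivity) h2ts')
  have h1 : ∀ s, 0 < s → ddq ψ x (u + v) - dq ψ x u s ≤ ddq ψ x v := by
    intro s hs
    exact le_ddq x _ fun s' hs' => by linarith [step s s' hs hs']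
  have h2 : ddq ψ x (u + v) - ddq ψ x v ≤ ddq ψ x u :=
    le_ddq x _ fun s hs => by linarith [h1 s hs]
  linarith

omit hψ in
lemma ddq_zero_nonneg : 0 ≤ ddq ψ x 0 := by
  refine le_ddq x _ fun t ht => ?_
  simp [dq]

omit hψ in
lemma ddq_zero_le : ddq ψ x 0 ≤ 0 := by
  have : dq ψ x 0 1 = 0 := by simp [dq]
  have h := csInf_le (α := ℝ) ?_ (show (0:ℝ) ∈ dq ψ x 0 '' Set.Ioi 0 from ⟨1, mem_Ioi.2 one_pos, this⟩)
  · exact h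
  · exact ⟨0, by rintro _ ⟨t, ht, rfl⟩; simp [dq]⟩

end helpers2

section helpers3

variable {E : Type*} [NormedAddCommGroup E] [InnerProductSpace ℝ E] [FiniteDimensional ℝ E]

lemma exists_subgrad_ge {ψ : E → ℝ} (hψ : ConvexOn ℝ Set.univ ψ) (x d : E) (c : ℝ)
    (h : ∀ t : ℝ, 0 < t → ψ x + t * c ≤ ψ (x + t • d)) :
    ∃ w : E, (∀ z, ψ x + ⟪w, z - x⟫ ≤ ψ z) ∧ c ≤ ⟪w, d⟫ := by
  have hpd : c ≤ ddq ψ x d := by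
    refine le_ddq x _ fun t ht => ?_
    rw [dq, le_div_iff₀ ht]
    have := h t ht
    nlinarith
  obtain ⟨g, hg1, hg2⟩ : ∃ g : E →ₗ[ℝ] ℝ, (∀ u, g u ≤ ddq ψ x u) ∧ c ≤ g d := by
    by_cases hd : d = 0
    · obtain ⟨g, -, hg⟩ := exists_extension_of_le_sublinear
        ⟨⊥, 0⟩ (ddq ψ x) (fun c' hc' u => ddq_smul hψ x hc' u) (ddq_add_le hψ x)
        (fun z => by
          have hz : (z : E) = 0 := (Submodule.mem_bot ℝ).1 z.2
          rw [hz]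
          exact ddq_zero_nonneg (ψ := ψ) x)
      refine ⟨g, hg, ?_⟩
      subst hd
      rw [map_zero]
      have := ddq_zero_le (ψ := ψ) x
      linarith
    · have H : ∀ c' : ℝ, c' • d = 0 → c' • ddq ψ x d = 0 := by
        intro c' hc'
        rcases smul_eq_zero.1 hc' with h | h
        · simp [h]
        · exact absurd h hd
      obtain ⟨g, hgf, hg⟩ := exists_extension_of_le_sublinear
        (LinearPMap.mkSpanSingleton' d (ddq ψ x d) H) (ddq ψ x)
        (fun c' hc' u => ddq_smul hψ x hc' u) (ddq_add_le hψ x)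
        (fun z => by
          obtain ⟨a, ha⟩ := Submodule.mem_span_singleton.1
            (by simpa using z.2 : (z : E) ∈ Submodule.span ℝ {d})
          have hz : z = ⟨a • d, ha ▸ z.2⟩ := Subtype.ext ha.symm
          rw [hz, LinearPMap.mkSpanSingleton'_apply]
          simp only [smul_eq_mul, RingHom.id_apply]
          rcases lt_trichotomy a 0 with hneg | hzero | hpos
          · have h1 : a • d = (-a) • (-d) := by module
            rw [h1, ddq_smul hψ x (by linarith) (-d)]
            have h2 : ddq ψ x 0 ≤ ddq ψ x d + ddq ψ x (-d) := by
              have := ddq_add_le hψ x d (-d)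
              simpa using this
            have h3 := ddq_zero_nonneg (ψ := ψ) x
            nlinarith
          · subst hzero
            simpa using ddq_zero_nonneg (ψ := ψ) x
          · rw [ddq_smul hψ x hpos d])
      refine ⟨g, hg, ?_⟩
      have hd' : d ∈ (LinearPMap.mkSpanSingleton' (σ := RingHom.id ℝ) d (ddq ψ x d) H).domain := by
        rw [LinearPMap.domain_mkSpanSingleton]
        exact Submodule.mem_span_singleton_self d
      have := hgf ⟨d, hd'⟩
      rw [LinearPMap.mkSpanSingleton'_apply_self] at this
      rw [show ((⟨d, hd'⟩ : (LinearPMap.mkSpanSingleton' d (ddq ψ x d) H).domain) : E) = d from rfl] at this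
      rw [this]
      exact hpd
  set w := (InnerProductSpace.toDual ℝ E).symm (LinearMap.toContinuousLinearMap g) with hw
  have hinner : ∀ u, ⟪w, u⟫ = g u := fun u => InnerProductSpace.toDual_symm_apply
  refine ⟨w, fun z => ?_, ?_⟩
  · have h2 : g (z - x) ≤ ddq ψ x (z - x) := hg1 _
    have h3 : ddq ψ x (z - x) ≤ dq ψ x (z - x) 1 := ddq_le hψ x _ one_pos
    have h4 : dq ψ x (z - x) 1 = ψ z - ψ x := by simp [dq]
    rw [hinner]
    linarith
  · rw [hinner]
    exact hg2

end helpers3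

lemma usc_exists_max {Y : Type*} [TopologicalSpace Y] [CompactSpace Y] [Nonempty Y]
    {f : Y → ℝ} (hf : UpperSemicontinuous f) : ∃ y₀, ∀ y, f y ≤ f y₀ := by
  by_contra hcon
  push_neg at hcon
  have hcover : (Set.univ : Set Y) ⊆ ⋃ y, f ⁻¹' Set.Iio (f y) := by
    intro z _
    obtain ⟨y, hy⟩ := hcon z
    exact Set.mem_iUnion.2 ⟨y, hy⟩
  obtain ⟨I, hI⟩ := isCompact_univ.elim_finite_subcover (fun y => f ⁻¹' Set.Iio (f y))
    (fun y => hf.isOpen_preimage (f y)) hcover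
  have hIne : I.Nonempty := by
    rcases Finset.eq_empty_or_nonempty I with h | h
    · exfalso
      have := hI (Set.mem_univ (Classical.arbitrary Y))
      simp [h] at this
    · exact h
  obtain ⟨y₀, hy₀I, hy₀⟩ := I.exists_max_image f hIne
  have := hI (Set.mem_univ y₀)
  simp only [Set.mem_iUnion] at this
  obtain ⟨y, hyI, hy⟩ := this
  exact absurd (hy₀ y hyI) (not_le.2 hy)

/-- Theorem on the subdifferential of a supremum of convex functions.
`Y` compact metric space, `φ y ·` convex for each `y`, `φ · x` upper semicontinuous for
each `x`, `Φ x = sup_y φ y x` finite near `x`. Then the subdifferential of `Φ` at `x`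
equals the closed convex hull of the union of the subdifferentials `∂(φ y ·)(x)` over the
active set `Y(x) = {y | φ y x = Φ x}`. -/
theorem subdifferential_sup_convex
    {n : ℕ} {Y : Type*} [MetricSpace Y] [CompactSpace Y] [Nonempty Y]
    (φ : Y → EuclideanSpace ℝ (Fin n) → ℝ)
    (hconv : ∀ y, ConvexOn ℝ Set.univ (φ y))
    (husc : ∀ x, UpperSemicontinuous fun y => φ y x)
    (Φ : EuclideanSpace ℝ (Fin n) → ℝ)
    (hΦ : ∀ x, Φ x = ⨆ y, φ y x)
    (x : EuclideanSpace ℝ (Fin n))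
    (hfin : ∀ᶠ z in nhds x, BddAbove (Set.range fun y => φ y z)) :
    {v : EuclideanSpace ℝ (Fin n) | ∀ z, Φ z ≥ Φ x + ⟪v, z - x⟫} =
      closure (convexHull ℝ
        (⋃ y ∈ {y : Y | φ y x = Φ x},
          {v : EuclideanSpace ℝ (Fin n) | ∀ z, φ y z ≥ φ y x + ⟪v, z - x⟫})) := by
  classical
  have hmax : ∀ z, ∃ y : Y, ∀ y', φ y' z ≤ φ y z := fun z => usc_exists_max (husc z)
  have hbdd : ∀ z, BddAbove (Set.range fun y => φ y z) := by
    intro z; obtain ⟨y, hy⟩ := hmax z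
    exact ⟨φ y z, by rintro _ ⟨y', rfl⟩; exact hy y'⟩
  have hle : ∀ z y, φ y z ≤ Φ z := fun z y => by rw [hΦ]; exact le_ciSup (hbdd z) y
  have hattain : ∀ z, ∃ y, φ y z = Φ z := by
    intro z; obtain ⟨y, hy⟩ := hmax z
    exact ⟨y, le_antisymm (hle z y) (by rw [hΦ]; exact ciSup_le hy)⟩
  apply Set.Subset.antisymm
  · -- hard direction
    intro v hv
    simp only [Set.mem_setOf_eq] at hv
    by_contra hvC
    obtain ⟨f, u, hfu, hufv⟩ := geometric_hahn_banach_closed_point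
      ((convex_convexHull ℝ _).closure) isClosed_closure hvC
    set d : EuclideanSpace ℝ (Fin n) := (InnerProductSpace.toDual ℝ _).symm f with hddef
    have hdf : ∀ a, ⟪d, a⟫ = f a := fun a => by
      rw [hddef]; exact InnerProductSpace.toDual_symm_apply
    set c : ℝ := f v with hcdef
    obtain ⟨t, htpos, htlt1, htto⟩ :
        ∃ t : ℕ → ℝ, (∀ k, 0 < t k) ∧ (∀ k, t k < 1) ∧
          Filter.Tendsto t Filter.atTop (nhds 0) := by
      refine ⟨fun k => 1 / ((k : ℝ) + 2), fun k => by positivity, fun k => ?_, ?_⟩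
      · rw [div_lt_one (by positivity)]
        have : (0:ℝ) ≤ (k : ℝ) := Nat.cast_nonneg k
        linarith
      · have h1 : Filter.Tendsto (fun k : ℕ => ((k:ℝ) + 2)) Filter.atTop Filter.atTop :=
          Filter.tendsto_atTop_add_const_right _ 2 tendsto_natCast_atTop_atTop
        simpa [one_div, Function.comp_def] using tendsto_inv_atTop_zero.comp h1
    choose ys hys using fun k => hattain (x + t k • d)
    obtain ⟨ystar, σ, hσmono, hσtend⟩ := CompactSpace.tendsto_subseq ys
    have hσ : Filter.Tendsto σ Filter.atTop Filter.atTop := hσmono.tendsto_atTop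
    have hΦlb : ∀ s : ℝ, Φ x + s * c ≤ Φ (x + s • d) := by
      intro s
      have h1 := hv (x + s • d)
      have h2 : ⟪v, x + s • d - x⟫ = s * c := by
        rw [add_sub_cancel_left, real_inner_smul_right, real_inner_comm, hdf]
      rw [h2] at h1
      linarith
    have hkey1 : ∀ k, Φ x + t k * c ≤ φ (ys k) (x + t k • d) := fun k => by
      rw [hys k]; exact hΦlb (t k)
    have hyslex : ∀ k, φ (ys k) x ≤ Φ x := fun k => hle x (ys k)
    have hkey2 : ∀ k, Φ x + t k * c - t k * Φ (x + d) ≤ (1 - t k) * φ (ys k) x := by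
      intro k
      have hpt : (1 - t k) • x + t k • (x + d) = x + t k • d := by
        match_scalars <;> ring
      have hcv := (hconv (ys k)).2 (Set.mem_univ x) (Set.mem_univ (x + d))
        (show (0:ℝ) ≤ 1 - t k by linarith [htlt1 k]) (htpos k).le
        (show (1 - t k) + t k = 1 by ring)
      rw [hpt] at hcv
      simp only [smul_eq_mul] at hcv
      have h5 := mul_le_mul_of_nonneg_left (hle (x + d) (ys k)) (htpos k).le
      linarith [hkey1 k]
    set L : ℕ → ℝ := fun k => (Φ x + t k * (c - Φ (x + d))) / (1 - t k) with hLdef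
    have hLle : ∀ k, L k ≤ φ (ys k) x := by
      intro k
      simp only [hLdef]
      rw [div_le_iff₀ (by linarith [htlt1 k] : (0:ℝ) < 1 - t k)]
      nlinarith [hkey2 k]
    have hLto : Filter.Tendsto L Filter.atTop (nhds (Φ x)) := by
      have h1 : Filter.Tendsto (fun k => Φ x + t k * (c - Φ (x + d))) Filter.atTop
          (nhds (Φ x + 0 * (c - Φ (x + d)))) :=
        tendsto_const_nhds.add (htto.mul_const _)
      have h2 : Filter.Tendsto (fun k => 1 - t k) Filter.atTop (nhds (1 - 0)) :=
        tendsto_const_nhds.sub htto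
      have h3 := h1.div h2 (by norm_num)
      simpa [hLdef, Pi.div_def] using h3
    have hactive : φ ystar x = Φ x := by
      refine le_antisymm (hle x ystar) ?_
      by_contra hlt
      push_neg at hlt
      set r := (φ ystar x + Φ x) / 2 with hrdef
      have hr1 : φ ystar x < r := by rw [hrdef]; linarith
      have hr2 : r < Φ x := by rw [hrdef]; linarith
      have hev1 : ∀ᶠ j in Filter.atTop, φ (ys (σ j)) x < r := by
        have := hσtend.eventually ((husc x) ystar r hr1)
        simpa [Function.comp] using this
      have hev2 : ∀ᶠ j in Filter.atTop, r < L (σ j) := by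
        have := (hLto.comp hσ).eventually_const_lt hr2
        simpa [Function.comp] using this
      obtain ⟨j, hj1, hj2⟩ := (hev1.and hev2).exists
      linarith [hLle (σ j)]
    have hdir : ∀ T : ℝ, 0 < T → Φ x + T * c ≤ φ ystar (x + T • d) := by
      intro T hT
      by_contra hlt
      push_neg at hlt
      set r := (φ ystar (x + T • d) + (Φ x + T * c)) / 2 with hrdef
      have hr1 : φ ystar (x + T • d) < r := by rw [hrdef]; linarith
      have hr2 : r < Φ x + T * c := by rw [hrdef]; linarith
      have hev1 : ∀ᶠ j in Filter.atTop, φ (ys (σ j)) (x + T • d) < r := by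
        have := hσtend.eventually ((husc (x + T • d)) ystar r hr1)
        simpa [Function.comp] using this
      have hlow : ∀ k, t k ≤ T → L k + T * c ≤ φ (ys k) (x + T • d) := by
        intro k hkT
        have hmono := dq_mono (hconv (ys k)) x d (htpos k) hkT
        have hq1 : c ≤ dq (φ (ys k)) x d (t k) := by
          rw [dq, le_div_iff₀ (htpos k)]
          nlinarith [hkey1 k, hyslex k]
        have hq2 : c ≤ dq (φ (ys k)) x d T := le_trans hq1 hmono
        rw [dq, le_div_iff₀ hT] at hq2
        nlinarith [hLle k]
      have hevT : ∀ᶠ j in Filter.atTop, t (σ j) ≤ T := by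
        have := (htto.comp hσ).eventually_lt_const hT
        filter_upwards [this] with j hj
        exact le_of_lt hj
      have hevL : ∀ᶠ j in Filter.atTop, r - T * c < L (σ j) := by
        have hrr : r - T * c < Φ x := by linarith
        have := (hLto.comp hσ).eventually_const_lt hrr
        simpa [Function.comp] using this
      obtain ⟨j, hj1, hj2, hj3⟩ := (hev1.and (hevT.and hevL)).exists
      linarith [hlow (σ j) hj2]
    obtain ⟨w, hw1, hw2⟩ := exists_subgrad_ge (hconv ystar) x d c
      (fun T hT => by rw [hactive]; exact hdir T hT)
    have hwS : w ∈ ⋃ y ∈ {y : Y | φ y x = Φ x},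
        {v' : EuclideanSpace ℝ (Fin n) | ∀ z, φ y z ≥ φ y x + ⟪v', z - x⟫} :=
      Set.mem_biUnion hactive (fun z => hw1 z)
    have hwC := subset_closure (subset_convexHull ℝ _ hwS)
    have h1 := hfu w hwC
    have h3 : c ≤ f w := by
      rw [← hdf w, real_inner_comm]
      exact hw2
    linarith
  · -- easy direction
    refine closure_minimal (convexHull_min ?_ ?_) ?_
    · rintro w hw
      simp only [Set.mem_iUnion, Set.mem_setOf_eq] at hw
      obtain ⟨y, hy, hwy⟩ := hw
      intro z
      calc Φ x + ⟪w, z - x⟫ = φ y x + ⟪w, z - x⟫ := by rw [hy]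
        _ ≤ φ y z := hwy z
        _ ≤ Φ z := hle z y
    · intro a ha b hb s t' hs ht' hst'
      simp only [Set.mem_setOf_eq] at ha hb ⊢
      intro z
      have e1 : s * (Φ x + ⟪a, z - x⟫) ≤ s * Φ z := mul_le_mul_of_nonneg_left (ha z) hs
      have e2 : t' * (Φ x + ⟪b, z - x⟫) ≤ t' * Φ z := mul_le_mul_of_nonneg_left (hb z) ht'
      have e3 : ⟪s • a + t' • b, z - x⟫ = s * ⟪a, z - x⟫ + t' * ⟪b, z - x⟫ := by
        rw [inner_add_left, real_inner_smul_left, real_inner_smul_left]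
      have e4 : s * Φ x + t' * Φ x = Φ x := by rw [← add_mul, hst', one_mul]
      have e5 : s * Φ z + t' * Φ z = Φ z := by rw [← add_mul, hst', one_mul]
      rw [ge_iff_le, e3]
      linarith
    · have hset : {v : EuclideanSpace ℝ (Fin n) | ∀ z, Φ z ≥ Φ x + ⟪v, z - x⟫} =
          ⋂ z, {v : EuclideanSpace ℝ (Fin n) | Φ x + ⟪v, z - x⟫ ≤ Φ z} := by
        ext v
        simp only [Set.mem_iInter, Set.mem_setOf_eq, ge_iff_le]
      rw [hset]
      exact isClosed_iInter fun z => isClosed_le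
        (continuous_const.add (continuous_id.inner continuous_const)) continuous_const
end

section
/- Let F and G be real Hilbert spaces, A : F → G a bounded linear operator, g ∈ G, ε > 0, and J : F → ℝ convex, lower semicontinuous, and coercive (J(f) → ∞ as ‖f‖ → ∞), strictly convex along ker A (for all f ≠ f' with f − f' ∈ ker A, J((f+f')/2) < (J(f)+J(f'))/2). Then for every λ > 0, the Lagrangian L(f,λ) = J(f) + λ(‖A f − g‖² − ε) has a unique minimizer f_λ over F. -/
open Filter Set

lemma nested_inter_nonempty {F : Type*} [NormedAddCommGroup F] [InnerProductSpace ℝ F]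
    [CompleteSpace F] (C : ℕ → Set F) (hne : ∀ n, (C n).Nonempty)
    (hcl : ∀ n, IsClosed (C n)) (hcv : ∀ n, Convex ℝ (C n))
    (hanti : ∀ m n, m ≤ n → C n ⊆ C m)
    (R : ℝ) (hR : ∀ n, ∀ x ∈ C n, ‖x‖ ≤ R) :
    ∃ x, ∀ n, x ∈ C n := by
  -- minimal norm elements
  have hproj : ∀ n, ∃ v ∈ C n, ‖(0:F) - v‖ = ⨅ w : C n, ‖(0:F) - w‖ := fun n =>
    exists_norm_eq_iInf_of_complete_convex (hne n) (hcl n).isComplete (hcv n) 0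
  choose x hx hxn using hproj
  set δ : ℕ → ℝ := fun n => ⨅ w : C n, ‖(0:F) - w‖ with hδ
  have hxδ : ∀ n, ‖x n‖ = δ n := by
    intro n
    have h := hxn n
    rw [zero_sub, norm_neg] at h
    exact h
  have hδle : ∀ n, ∀ w ∈ C n, δ n ≤ ‖w‖ := by
    intro n w hw
    have : δ n ≤ ‖(0:F) - w‖ := by
      haveI : Nonempty (C n) := (hne n).to_subtype
      exact ciInf_le ⟨0, Set.forall_mem_range.2 fun _ => norm_nonneg _⟩ (⟨w, hw⟩ : C n)
    simpa using this
  have hδ0 : ∀ n, 0 ≤ δ n := fun n => (hxδ n) ▸ norm_nonneg (x n)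
  have hδmono : Monotone δ := by
    intro m n hmn
    have : δ m ≤ ‖x n‖ := hδle m (x n) (hanti m n hmn (hx n))
    rwa [hxδ n] at this
  have hδbdd : ∀ n, δ n ≤ R := fun n => by
    rw [← hxδ n]; exact hR n (x n) (hx n)
  set d : ℝ := ⨆ n, δ n with hd
  have hbddA : BddAbove (Set.range δ) := ⟨R, Set.forall_mem_range.2 hδbdd⟩
  have hδd : ∀ n, δ n ≤ d := fun n => le_ciSup hbddA n
  have htend : Tendsto δ atTop (nhds d) := tendsto_atTop_ciSup hδmono hbddA
  -- Cauchy estimate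
  have key : ∀ N m n, N ≤ m → N ≤ n → ‖x m - x n‖ ^ 2 ≤ 4 * (d ^ 2 - δ N ^ 2) := by
    intro N m n hNm hNn
    have hmidmem : (2:ℝ)⁻¹ • (x m + x n) ∈ C N := by
      have h1 : x m ∈ C N := hanti N m hNm (hx m)
      have h2 : x n ∈ C N := hanti N n hNn (hx n)
      have := hcv N h1 h2 (by norm_num : (0:ℝ) ≤ 2⁻¹) (by norm_num : (0:ℝ) ≤ 2⁻¹) (by norm_num)
      rwa [← smul_add] at this
    have hmid : δ N ≤ ‖(2:ℝ)⁻¹ • (x m + x n)‖ := hδle N _ hmidmem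
    have hnorm : ‖(2:ℝ)⁻¹ • (x m + x n)‖ = 2⁻¹ * ‖x m + x n‖ := by
      rw [norm_smul]; norm_num
    have hpar := parallelogram_law_with_norm ℝ (x m) (x n)
    have hm := hxδ m; have hn := hxδ n
    have hdm : δ m ≤ d := hδd m
    have hdn : δ n ≤ d := hδd n
    have hNm' : δ N ≤ δ m := hδmono hNm
    have hNn' : δ N ≤ δ n := hδmono hNn
    have h0m : 0 ≤ δ m := hδ0 m
    have h0n : 0 ≤ δ n := hδ0 n
    have h0N : 0 ≤ δ N := hδ0 N
    rw [hnorm] at hmid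
    nlinarith [norm_nonneg (x m + x n), norm_nonneg (x m - x n), sq_nonneg (‖x m + x n‖)]
  have hcauchy : CauchySeq x := by
    apply cauchySeq_of_le_tendsto_0 (fun N => Real.sqrt (4 * (d ^ 2 - δ N ^ 2)))
    · intro m n N hNm hNn
      rw [dist_eq_norm]
      have h2 := key N m n hNm hNn
      exact Real.le_sqrt_of_sq_le h2
    · have h1 : Tendsto (fun N => 4 * (d ^ 2 - δ N ^ 2)) atTop (nhds 0) := by
        have hp := htend.pow 2
        have h2 : Tendsto (fun N => d ^ 2 - δ N ^ 2) atTop (nhds (d ^ 2 - d ^ 2)) :=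
          tendsto_const_nhds.sub hp
        rw [sub_self] at h2
        have h3 := h2.const_mul (4:ℝ)
        rwa [mul_zero] at h3
      exact (Real.continuous_sqrt.tendsto' 0 0 (by simp)).comp h1
  obtain ⟨p, hp⟩ := cauchySeq_tendsto_of_complete hcauchy
  refine ⟨p, fun n => ?_⟩
  refine (hcl n).mem_of_tendsto hp ?_
  filter_upwards [eventually_ge_atTop n] with m hm
  exact hanti n m hm (hx m)

/-- Under Assumption 1 (`J` proper convex, lower semicontinuous and
coercive) and strict convexity of `J` along `ker A`, for every `λ > 0` the Lagrangian
`L(f, λ) = J f + λ (‖A f − g‖² − ε)` has a unique minimizer `f_λ` over `F`. -/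
theorem lagrangian_has_unique_minimizer
    {F G : Type*} [NormedAddCommGroup F] [InnerProductSpace ℝ F] [CompleteSpace F]
    [NormedAddCommGroup G] [InnerProductSpace ℝ G] [CompleteSpace G]
    (A : F →L[ℝ] G) (g : G) (ε : ℝ) (hε : 0 < ε) (J : F → ℝ)
    (hJconv : ConvexOn ℝ Set.univ J)
    (hJlsc : LowerSemicontinuous J)
    (hJcoer : Filter.Tendsto J (Filter.comap (fun f : F => ‖f‖) Filter.atTop) Filter.atTop)
    (hJstrict : ∀ f f' : F, f ≠ f' → A (f - f') = 0 →
      J ((2 : ℝ)⁻¹ • (f + f')) < (J f + J f') / 2)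
    (lam : ℝ) (hlam : 0 < lam) :
    ∃! flam : F, ∀ f : F,
      J flam + lam * (‖A flam - g‖ ^ 2 - ε) ≤ J f + lam * (‖A f - g‖ ^ 2 - ε) := by
  classical
  set L : F → ℝ := fun f => J f + lam * (‖A f - g‖ ^ 2 - ε) with hL
  -- convexity of L
  have hLconv : ConvexOn ℝ Set.univ L := by
    refine ⟨convex_univ, ?_⟩
    intro x _ y _ a b ha hb hab
    have hJ := hJconv.2 (Set.mem_univ x) (Set.mem_univ y) ha hb hab
    simp only [smul_eq_mul] at hJ
    have hAeq : A (a • x + b • y) - g = a • (A x - g) + b • (A y - g) := by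
      have hg : a • g + b • g = g := by rw [← add_smul, hab, one_smul]
      rw [map_add, map_smul, map_smul, smul_sub, smul_sub,
        show a • A x - a • g + (b • A y - b • g) = a • A x + b • A y - (a • g + b • g) from
          by abel, hg]
    have h1 : ‖A (a • x + b • y) - g‖ ≤ a * ‖A x - g‖ + b * ‖A y - g‖ := by
      rw [hAeq]
      calc ‖a • (A x - g) + b • (A y - g)‖ ≤ ‖a • (A x - g)‖ + ‖b • (A y - g)‖ :=
            norm_add_le _ _
        _ = a * ‖A x - g‖ + b * ‖A y - g‖ := by
            rw [norm_smul, norm_smul, Real.norm_of_nonneg ha, Real.norm_of_nonneg hb]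
    have hQ : ‖A (a • x + b • y) - g‖ ^ 2 ≤ a * ‖A x - g‖ ^ 2 + b * ‖A y - g‖ ^ 2 := by
      nlinarith [norm_nonneg (A (a • x + b • y) - g), norm_nonneg (A x - g),
        norm_nonneg (A y - g), mul_nonneg ha hb, sq_nonneg (‖A x - g‖ - ‖A y - g‖)]
    simp only [hL, smul_eq_mul]
    have hQ' := mul_le_mul_of_nonneg_left hQ hlam.le
    have key : a * (J x + lam * (‖A x - g‖ ^ 2 - ε)) + b * (J y + lam * (‖A y - g‖ ^ 2 - ε))
        = a * J x + b * J y + lam * (a * ‖A x - g‖ ^ 2 + b * ‖A y - g‖ ^ 2) - lam * ε := by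
      linear_combination (-(lam * ε)) * hab
    rw [key]
    linarith
  -- lower semicontinuity of L
  have hLlsc : LowerSemicontinuous L := by
    have hc : Continuous fun f : F => lam * (‖A f - g‖ ^ 2 - ε) := by fun_prop
    exact hJlsc.add hc.lowerSemicontinuous
  have hclosed : ∀ t : ℝ, IsClosed {f : F | L f ≤ t} := fun t =>
    hLlsc.isClosed_preimage t
  have hconvset : ∀ t : ℝ, Convex ℝ {f : F | L f ≤ t} := by
    intro t
    have := hLconv.convex_le t
    simpa [Set.sep_univ] using this
  -- coercivity : sublevel sets are bounded
  have hsub : ∀ t : ℝ, ∃ R : ℝ, ∀ f : F, L f ≤ t → ‖f‖ ≤ R := by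
    intro t
    have h := (Filter.tendsto_atTop.mp hJcoer) (t + lam * ε + 1)
    rw [Filter.eventually_comap, Filter.eventually_atTop] at h
    obtain ⟨R, hR⟩ := h
    refine ⟨max R 0, fun f hf => ?_⟩
    by_contra hcon
    push_neg at hcon
    have hfR : R ≤ ‖f‖ := le_trans (le_max_left _ _) hcon.le
    have h2 := hR ‖f‖ hfR f rfl
    have hQ0 : 0 ≤ ‖A f - g‖ ^ 2 := sq_nonneg _
    simp only [hL] at hf
    nlinarith
  -- existence of a minimizer
  have hex : ∃ flam : F, ∀ f, L flam ≤ L f := by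
    by_cases hbdd : BddBelow (Set.range L)
    · set m := sInf (Set.range L) with hm
      obtain ⟨R, hR⟩ := hsub (m + 1)
      have hmono : ∀ j k : ℕ, j ≤ k → (1:ℝ)/(k+1) ≤ 1/(j+1) := by
        intro j k hjk
        apply one_div_le_one_div_of_le (by positivity)
        have : (j:ℝ) ≤ k := Nat.cast_le.mpr hjk
        linarith
      have hne : ∀ n : ℕ, ({f : F | L f ≤ m + 1/(n+1)}).Nonempty := by
        intro n
        have hpos : (0:ℝ) < 1/(n+1) := by positivity
        have hlt : sInf (Set.range L) < m + 1/(n+1) := by rw [← hm]; linarith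
        obtain ⟨y, hy, hylt⟩ := exists_lt_of_csInf_lt (Set.range_nonempty L) hlt
        obtain ⟨f, rfl⟩ := hy
        exact ⟨f, hylt.le⟩
      have hone : ∀ n : ℕ, (1:ℝ)/(n+1) ≤ 1 := by
        intro n
        rw [div_le_one (by positivity)]
        have : (0:ℝ) ≤ n := Nat.cast_nonneg n
        linarith
      obtain ⟨x, hx⟩ := nested_inter_nonempty (fun n => {f : F | L f ≤ m + 1/(n+1)})
        hne (fun n => hclosed _) (fun n => hconvset _)
        (fun j k hjk f hf => by
          have hf' : L f ≤ m + 1/(k+1) := hf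
          show L f ≤ m + 1/(j+1)
          exact hf'.trans (add_le_add le_rfl (hmono j k hjk)))
        R (fun n f hf => by
          have hf' : L f ≤ m + 1/(n+1) := hf
          exact hR f (hf'.trans (add_le_add le_rfl (hone n))))
      refine ⟨x, fun f => ?_⟩
      have h1 : L x ≤ m := by
        by_contra hcon
        push_neg at hcon
        obtain ⟨n, hn⟩ := exists_nat_one_div_lt (sub_pos.mpr hcon)
        have := hx n
        simp only [Set.mem_setOf_eq] at this
        linarith
      exact h1.trans (csInf_le hbdd ⟨f, rfl⟩)
    · rw [not_bddBelow_iff] at hbdd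
      obtain ⟨R, hR⟩ := hsub 0
      have hne : ∀ n : ℕ, ({f : F | L f ≤ -(n:ℝ)}).Nonempty := by
        intro n
        obtain ⟨y, hy, hylt⟩ := hbdd (-(n:ℝ))
        obtain ⟨f, rfl⟩ := hy
        exact ⟨f, hylt.le⟩
      obtain ⟨x, hx⟩ := nested_inter_nonempty (fun n => {f : F | L f ≤ -(n:ℝ)}) hne
        (fun n => hclosed _) (fun n => hconvset _)
        (fun j k hjk f hf => by
          have hf' : L f ≤ -(k:ℝ) := hf
          show L f ≤ -(j:ℝ)
          have : (j:ℝ) ≤ k := Nat.cast_le.mpr hjk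
          linarith)
        R (fun n f hf => by
          have hf' : L f ≤ -(n:ℝ) := hf
          have : (0:ℝ) ≤ n := Nat.cast_nonneg n
          exact hR f (by linarith))
      exfalso
      obtain ⟨n, hn⟩ := exists_nat_gt (-(L x))
      have := hx n
      simp only [Set.mem_setOf_eq] at this
      linarith
  -- conclusion with uniqueness
  obtain ⟨flam, hmin⟩ := hex
  refine ⟨flam, fun f => hmin f, fun y hy' => ?_⟩
  have hy : ∀ f, L y ≤ L f := hy'
  by_contra hne
  have heq : L y = L flam := le_antisymm (hy flam) (hmin y)
  set h := (2:ℝ)⁻¹ • (y + flam) with hh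
  have hhge : L y ≤ L h := hy h
  have hLexp : ∀ f : F, L f = J f + lam * (‖A f - g‖ ^ 2 - ε) := fun f => rfl
  by_cases hker : A (y - flam) = 0
  · have hJlt := hJstrict y flam hne hker
    have hAeq : A y = A flam := by
      rw [map_sub] at hker; exact sub_eq_zero.mp hker
    have hAh : A h = A y := by
      rw [hh, map_smul, map_add, ← hAeq, ← two_smul ℝ (A y), smul_smul]
      norm_num
    have hJeq : J y = J flam := by
      have h1 := hLexp y
      have h2 := hLexp flam
      rw [heq, hAeq] at h1
      linarith
    rw [← hh] at hJlt
    have hLh : L h < L y := by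
      rw [hLexp h, hLexp y, hAh]
      linarith [hJlt, hJeq]
    linarith
  · have hJle : J h ≤ (J y + J flam) / 2 := by
      have hc := hJconv.2 (Set.mem_univ y) (Set.mem_univ flam)
        (by norm_num : (0:ℝ) ≤ 2⁻¹) (by norm_num : (0:ℝ) ≤ 2⁻¹) (by norm_num)
      rw [← smul_add] at hc
      simp only [smul_eq_mul] at hc
      rw [hh]
      linarith
    have hune : A y - g ≠ A flam - g := by
      intro hco
      apply hker
      rw [map_sub, sub_eq_zero]
      exact sub_left_injective hco
    have hAh : A h - g = (2:ℝ)⁻¹ • ((A y - g) + (A flam - g)) := by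
      have hgg : (2:ℝ)⁻¹ • ((g:G) + g) = g := by
        rw [← two_smul ℝ (g:G), smul_smul]; norm_num
      rw [hh, map_smul, map_add]
      rw [show (A y - g) + (A flam - g) = (A y + A flam) - (g + g) by abel]
      rw [smul_sub, hgg]
    have hpar := parallelogram_law_with_norm ℝ (A y - g) (A flam - g)
    have hpos : 0 < ‖(A y - g) - (A flam - g)‖ := norm_pos_iff.mpr (sub_ne_zero.mpr hune)
    have hqh : ‖A h - g‖ ^ 2 < (‖A y - g‖ ^ 2 + ‖A flam - g‖ ^ 2) / 2 := by
      rw [hAh, norm_smul]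
      have : ‖(2:ℝ)⁻¹‖ = 2⁻¹ := by rw [Real.norm_of_nonneg]; norm_num
      rw [this]
      nlinarith [hpar, hpos, norm_nonneg ((A y - g) + (A flam - g)),
        norm_nonneg ((A y - g) - (A flam - g))]
    have hLh : L h < L y := by
      rw [hLexp h, hLexp y]
      have h1 := hLexp flam
      have h2 : J y + lam * (‖A y - g‖ ^ 2 - ε) = J flam + lam * (‖A flam - g‖ ^ 2 - ε) := by
        rw [← hLexp y, ← hLexp flam]; exact heq
      linarith [hJle, mul_lt_mul_of_pos_left hqh hlam, h2]
    linarith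
end

section
/- Let F and G be real Hilbert spaces, A : F → G a bounded linear operator, g ∈ G, ε > 0, and J : F → ℝ convex, lower semicontinuous, and coercive, strictly convex along ker A. For λ > 0 let f_λ denote the unique minimizer over F of L(f,λ) = J(f) + λ(‖A f − g‖² − ε), and let D(λ) = inf_{f ∈ F} L(f,λ). Then D is differentiable at every λ > 0, with derivative D'(λ) = ‖A f_λ − g‖² − ε. -/
/-- Proposition: differentiability of the dual function.
Under Assumption 1 (`J` convex, lsc, coercive) and strict convexity along `ker A`, for
each `λ > 0` the Lagrangian `L(·, λ)` has a unique minimizer `f_λ`; the dual function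
`D(λ) = inf_f L(f, λ)` is then differentiable at every `λ > 0` with
`D'(λ) = ‖A f_λ − g‖² − ε`. -/
theorem dual_function_differentiable
    {F G : Type*} [NormedAddCommGroup F] [InnerProductSpace ℝ F] [CompleteSpace F]
    [NormedAddCommGroup G] [InnerProductSpace ℝ G] [CompleteSpace G]
    (A : F →L[ℝ] G) (g : G) (ε : ℝ) (hε : 0 < ε) (J : F → ℝ)
    (hJconv : ConvexOn ℝ Set.univ J)
    (hJlsc : LowerSemicontinuous J)
    (hJcoer : Filter.Tendsto J (Filter.comap (fun f : F => ‖f‖) Filter.atTop) Filter.atTop)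
    (hJstrict : ∀ f f' : F, f ≠ f' → A (f - f') = 0 →
      J ((2 : ℝ)⁻¹ • (f + f')) < (J f + J f') / 2)
    (fl : ℝ → F)
    (hfl : ∀ μ : ℝ, 0 < μ → ∀ f : F,
      J (fl μ) + μ * (‖A (fl μ) - g‖ ^ 2 - ε) ≤ J f + μ * (‖A f - g‖ ^ 2 - ε))
    (D : ℝ → ℝ)
    (hD : ∀ μ : ℝ, D μ = ⨅ f : F, (J f + μ * (‖A f - g‖ ^ 2 - ε))) :
    ∀ lam : ℝ, 0 < lam → HasDerivAt D (‖A (fl lam) - g‖ ^ 2 - ε) lam := by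
  intro lam hlam
  -- cross inequality between minimizers at different parameters
  have cross : ∀ μ ν : ℝ, 0 < μ →
      J (fl μ) + μ * (‖A (fl μ) - g‖ ^ 2 - ε) ≤ J (fl ν) + μ * (‖A (fl ν) - g‖ ^ 2 - ε) :=
    fun μ ν hμ => hfl μ hμ (fl ν)
  -- value of D at positive parameters
  have Dval : ∀ μ : ℝ, 0 < μ → D μ = J (fl μ) + μ * (‖A (fl μ) - g‖ ^ 2 - ε) := by
    intro μ hμ
    rw [hD μ]
    refine le_antisymm (ciInf_le ⟨J (fl μ) + μ * (‖A (fl μ) - g‖ ^ 2 - ε), ?_⟩ (fl μ))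
      (le_ciInf (hfl μ hμ))
    rintro x ⟨f, rfl⟩
    exact hfl μ hμ f
  -- quantitative strong convexity along A at lam
  have quant : ∀ f : F,
      J (fl lam) + lam * (‖A (fl lam) - g‖ ^ 2 - ε) + (lam / 2) * ‖A (f - fl lam)‖ ^ 2
        ≤ J f + lam * (‖A f - g‖ ^ 2 - ε) := by
    intro f
    have hm := hfl lam hlam ((2 : ℝ)⁻¹ • (f + fl lam))
    have hJ : J ((2 : ℝ)⁻¹ • (f + fl lam)) ≤ (1/2) * J f + (1/2) * J (fl lam) := by
      have h2 := hJconv.2 (Set.mem_univ f) (Set.mem_univ (fl lam))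
        (by norm_num : (0:ℝ) ≤ 1/2) (by norm_num : (0:ℝ) ≤ 1/2) (by norm_num : (1:ℝ)/2 + 1/2 = 1)
      have heq : (2 : ℝ)⁻¹ • (f + fl lam) = (1/2 : ℝ) • f + (1/2 : ℝ) • fl lam := by
        rw [smul_add]; norm_num
      rw [heq]; exact h2
    have hAeq : A ((2 : ℝ)⁻¹ • (f + fl lam)) - g
        = (2 : ℝ)⁻¹ • ((A f - g) + (A (fl lam) - g)) := by
      rw [map_smul, map_add]
      module
    have hpar : ‖(A f - g) + (A (fl lam) - g)‖ ^ 2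
        = 2 * ‖A f - g‖ ^ 2 + 2 * ‖A (fl lam) - g‖ ^ 2 - ‖A (f - fl lam)‖ ^ 2 := by
      have hsub : (A f - g) - (A (fl lam) - g) = A (f - fl lam) := by
        rw [map_sub]; abel
      have h1 := norm_add_sq_real (A f - g) (A (fl lam) - g)
      have h2 := norm_sub_sq_real (A f - g) (A (fl lam) - g)
      rw [hsub] at h2
      linarith
    have hnorm : ‖A ((2 : ℝ)⁻¹ • (f + fl lam)) - g‖ ^ 2
        = (2 * ‖A f - g‖ ^ 2 + 2 * ‖A (fl lam) - g‖ ^ 2 - ‖A (f - fl lam)‖ ^ 2) / 4 := by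
      rw [hAeq, norm_smul, mul_pow, hpar]
      simp [abs_of_pos]
      ring
    rw [hnorm] at hm
    nlinarith [hm, hJ]
  -- bound on residual norms near lam
  set B : ℝ := ‖A (fl (lam / 2)) - g‖ with hB
  have hbound : ∀ μ : ℝ, lam / 2 < μ → ‖A (fl μ) - g‖ ≤ B := by
    intro μ hμ2
    have hμpos : 0 < μ := lt_trans (half_pos hlam) hμ2
    have m1 := cross μ (lam / 2) hμpos
    have m2 := cross (lam / 2) μ (half_pos hlam)
    have hmono : ‖A (fl μ) - g‖ ^ 2 ≤ B ^ 2 := by nlinarith [m1, m2]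
    nlinarith [norm_nonneg (A (fl μ) - g), norm_nonneg (A (fl (lam / 2)) - g)]
  have hBlam : ‖A (fl lam) - g‖ ≤ B := hbound lam (by linarith)
  have hBnn : 0 ≤ B := norm_nonneg _
  -- main quadratic estimate near lam
  have main : ∀ μ : ℝ, dist μ lam < lam / 2 →
      ‖D μ - D lam - (μ - lam) * (‖A (fl lam) - g‖ ^ 2 - ε)‖
        ≤ (8 * B ^ 2 / lam) * ‖(μ - lam) ^ 2‖ := by
    intro μ hdist
    rw [Real.dist_eq] at hdist
    have habs := abs_lt.1 hdist
    have hμ2 : lam / 2 < μ := by linarith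
    have hμpos : 0 < μ := lt_trans (half_pos hlam) hμ2
    have hBμ : ‖A (fl μ) - g‖ ≤ B := hbound μ hμ2
    set a : ℝ := ‖A (fl μ) - g‖ ^ 2 with ha
    set b : ℝ := ‖A (fl lam) - g‖ ^ 2 with hb
    set t : ℝ := ‖A (fl μ - fl lam)‖ with ht
    have htnn : 0 ≤ t := norm_nonneg _
    -- |a - b| ≤ 2 B t
    have hre : |‖A (fl μ) - g‖ - ‖A (fl lam) - g‖| ≤ t := by
      have := abs_norm_sub_norm_le (A (fl μ) - g) (A (fl lam) - g)
      have hsub : (A (fl μ) - g) - (A (fl lam) - g) = A (fl μ - fl lam) := by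
        rw [map_sub]; abel
      rwa [hsub] at this
    obtain ⟨hre1, hre2⟩ := abs_le.1 hre
    have hdab : |a - b| ≤ 2 * B * t := by
      rw [abs_le]
      constructor
      · nlinarith [norm_nonneg (A (fl μ) - g), norm_nonneg (A (fl lam) - g), hBμ, hBlam]
      · nlinarith [norm_nonneg (A (fl μ) - g), norm_nonneg (A (fl lam) - g), hBμ, hBlam]
    -- quadratic key inequality
    have hc1 : J (fl μ) + μ * (a - ε) ≤ J (fl lam) + μ * (b - ε) := by
      have h := cross μ lam hμpos
      rw [← ha, ← hb] at h; exact h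
    have hc2 : J (fl lam) + lam * (b - ε) ≤ J (fl μ) + lam * (a - ε) := by
      have h := cross lam μ hlam
      rw [← ha, ← hb] at h; exact h
    have key1 : (lam / 2) * t ^ 2 ≤ (lam - μ) * (a - b) := by
      have hq := quant (fl μ)
      rw [← ha, ← ht] at hq
      linarith [hq, hc1]
    have key2 : (lam - μ) * (a - b) ≤ |μ - lam| * (2 * B * t) := by
      calc (lam - μ) * (a - b) ≤ |(lam - μ) * (a - b)| := le_abs_self _
        _ = |lam - μ| * |a - b| := abs_mul _ _
        _ = |μ - lam| * |a - b| := by rw [abs_sub_comm]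
        _ ≤ |μ - lam| * (2 * B * t) :=
            mul_le_mul_of_nonneg_left hdab (abs_nonneg _)
    -- |a - b| ≤ (8 B² / lam) |μ - lam|
    have hab : |a - b| ≤ (8 * B ^ 2 / lam) * |μ - lam| := by
      rcases eq_or_lt_of_le htnn with h0 | hpos
      · have : |a - b| ≤ 0 := by rw [← h0] at hdab; linarith [hdab]
        have h8 : 0 ≤ (8 * B ^ 2 / lam) * |μ - lam| := by positivity
        linarith [abs_nonneg (a - b)]
      · have htle : t ≤ (4 * B / lam) * |μ - lam| := by
          have h1 : (lam / 2) * t ^ 2 ≤ |μ - lam| * (2 * B * t) := le_trans key1 key2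
          have h2 : (lam / 2) * t ≤ |μ - lam| * (2 * B) := by
            refine le_of_mul_le_mul_right ?_ hpos
            calc lam / 2 * t * t = (lam / 2) * t ^ 2 := by ring
              _ ≤ |μ - lam| * (2 * B * t) := h1
              _ = |μ - lam| * (2 * B) * t := by ring
          rw [div_mul_eq_mul_div, le_div_iff₀ hlam]
          linarith [h2]
        calc |a - b| ≤ 2 * B * t := hdab
          _ ≤ 2 * B * ((4 * B / lam) * |μ - lam|) :=
              mul_le_mul_of_nonneg_left htle (by positivity)
          _ = (8 * B ^ 2 / lam) * |μ - lam| := by ring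
    -- sandwich bounds on D
    have upper : D μ - D lam ≤ (μ - lam) * (b - ε) := by
      rw [Dval μ hμpos, Dval lam hlam, ← ha, ← hb]
      linarith [hc1]
    have lower : (μ - lam) * (a - ε) ≤ D μ - D lam := by
      rw [Dval μ hμpos, Dval lam hlam, ← ha, ← hb]
      linarith [hc2]

    have goal1 : |D μ - D lam - (μ - lam) * (b - ε)| ≤ |μ - lam| * |a - b| := by
      rw [abs_le]
      constructor
      · have : (μ - lam) * (a - b) ≤ D μ - D lam - (μ - lam) * (b - ε) := by
          linarith [lower]
        have h2 : -(|μ - lam| * |a - b|) ≤ (μ - lam) * (a - b) := by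
          have := neg_abs_le ((μ - lam) * (a - b))
          rw [abs_mul] at this
          linarith
        linarith
      · have h2 : (0:ℝ) ≤ |μ - lam| * |a - b| := by positivity
        linarith [upper]
    have : ‖D μ - D lam - (μ - lam) * (b - ε)‖ ≤ |μ - lam| * ((8 * B ^ 2 / lam) * |μ - lam|) :=
      le_trans goal1 (mul_le_mul_of_nonneg_left hab (abs_nonneg _))
    calc ‖D μ - D lam - (μ - lam) * (b - ε)‖
        ≤ |μ - lam| * ((8 * B ^ 2 / lam) * |μ - lam|) := this
      _ = (8 * B ^ 2 / lam) * ‖(μ - lam) ^ 2‖ := by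
          rw [Real.norm_eq_abs, abs_pow]; ring
  -- conclude via little-o characterization
  rw [hasDerivAt_iff_isLittleO]
  have big : (fun μ => D μ - D lam - (μ - lam) • (‖A (fl lam) - g‖ ^ 2 - ε))
      =O[nhds lam] (fun μ => (μ - lam) ^ 2) := by
    apply Asymptotics.IsBigO.of_bound (8 * B ^ 2 / lam)
    rw [Metric.eventually_nhds_iff]
    exact ⟨lam / 2, half_pos hlam, fun μ hμ => by
      simpa [smul_eq_mul] using main μ hμ⟩
  have small : (fun μ : ℝ => (μ - lam) ^ 2) =o[nhds lam] (fun μ => μ - lam) := by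
    rw [Asymptotics.isLittleO_iff]
    intro c hc
    rw [Metric.eventually_nhds_iff]
    refine ⟨c, hc, fun μ hμ => ?_⟩
    rw [Real.dist_eq] at hμ
    rw [Real.norm_eq_abs, Real.norm_eq_abs, abs_pow, sq]
    nlinarith [abs_nonneg (μ - lam), hμ]
  exact big.trans_isLittleO small
end

section
/- Let F and G be real Hilbert spaces, A : F → G a bounded linear operator, g ∈ G, and J : F → ℝ convex, lower semicontinuous, and coercive, strictly convex along ker A. Let τ satisfy dist(g, closure(A F)) < τ < ‖g‖, set ε = τ², and let D(λ) = inf_{f ∈ F} [ J(f) + λ(‖A f − g‖² − ε) ]. If λ̄ > 0 maximizes D over (0, ∞), then the unique minimizer f_{λ̄} of L(·, λ̄) satisfies ‖A f_{λ̄} − g‖² = τ². -/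
set_option maxHeartbeats 1000000


/-- discrepancy at the dual maximizer, from Theorem
`estimation-lambda`. Under Assumption 1 and strict convexity of `J` along `ker A`, with
`dist(g, closure (A F)) < τ < ‖g‖` and `ε = τ²`: if `λ̄ > 0` maximizes the dual function
`D` over `(0, ∞)`, then the unique minimizer `f_λ̄` of the Lagrangian `L(·, λ̄)` satisfies
`‖A f_λ̄ − g‖² = τ²`. -/
theorem discrepancy_at_dual_maximizer
    {F G : Type*} [NormedAddCommGroup F] [InnerProductSpace ℝ F] [CompleteSpace F]
    [NormedAddCommGroup G] [InnerProductSpace ℝ G] [CompleteSpace G]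
    (A : F →L[ℝ] G) (g : G) (J : F → ℝ)
    (hJconv : ConvexOn ℝ Set.univ J)
    (hJlsc : LowerSemicontinuous J)
    (hJcoer : Filter.Tendsto J (Filter.comap (fun f : F => ‖f‖) Filter.atTop) Filter.atTop)
    (hJstrict : ∀ f f' : F, f ≠ f' → A (f - f') = 0 →
      J ((2 : ℝ)⁻¹ • (f + f')) < (J f + J f') / 2)
    (τ : ℝ) (hτpos : 0 < τ)
    (hdist : Metric.infDist g (closure (Set.range fun f : F => A f)) < τ)
    (hτg : τ < ‖g‖)
    (D : ℝ → ℝ)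
    (hD : ∀ lam : ℝ, D lam = ⨅ f : F, (J f + lam * (‖A f - g‖ ^ 2 - τ ^ 2)))
    (lam : ℝ) (hlam : 0 < lam)
    (hmax : ∀ μ : ℝ, 0 < μ → D μ ≤ D lam)
    (flam : F)
    (hflam : ∀ f : F,
      J flam + lam * (‖A flam - g‖ ^ 2 - τ ^ 2) ≤ J f + lam * (‖A f - g‖ ^ 2 - τ ^ 2)) :
    ‖A flam - g‖ ^ 2 = τ ^ 2 := by
  by_contra hne
  set b : ℝ := ‖A flam - g‖ with hbdef
  set d : ℝ := b ^ 2 - τ ^ 2 with hddef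
  have hdne : d ≠ 0 := sub_ne_zero.mpr hne
  have habsd : 0 < |d| := abs_pos.mpr hdne
  have hb0 : 0 ≤ b := norm_nonneg _
  set δ : ℝ := min (lam / 4) (lam * |d| / (8 * (b ^ 2 + 1))) with hδdef
  have hδpos : 0 < δ := lt_min (by linarith) (by positivity)
  have hδ1 : δ ≤ lam / 4 := min_le_left _ _
  have hδ2 : δ * b ^ 2 ≤ lam * |d| / 8 := by
    have h2 : δ ≤ lam * |d| / (8 * (b ^ 2 + 1)) := min_le_right _ _
    have hpos : (0:ℝ) < 8 * (b ^ 2 + 1) := by positivity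
    have := (le_div_iff₀ hpos).mp h2
    nlinarith [sq_nonneg b, hδpos.le]
  -- choose the sign of the perturbation
  obtain ⟨s, hs1, hs2⟩ : ∃ s : ℝ, s * d = δ * |d| ∧ |s| = δ := by
    rcases hdne.lt_or_gt with hd | hd
    · exact ⟨-δ, by rw [abs_of_neg hd]; ring, by rw [abs_neg, abs_of_pos hδpos]⟩
    · exact ⟨δ, by rw [abs_of_pos hd], abs_of_pos hδpos⟩
  set μ : ℝ := lam + s with hμdef
  have hμpos : 0 < μ := by
    have := neg_abs_le s
    rw [hs2] at this
    simp only [hμdef]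
    linarith
  -- key strong-convexity estimate
  have key : ∀ f : F,
      J flam + lam * (b ^ 2 - τ ^ 2) + (lam / 2) * ‖A f - A flam‖ ^ 2
        ≤ J f + lam * (‖A f - g‖ ^ 2 - τ ^ 2) := by
    intro f
    have hm := hflam ((2 : ℝ)⁻¹ • (f + flam))
    have hJm : J ((2 : ℝ)⁻¹ • (f + flam)) ≤ (J f + J flam) / 2 := by
      have h2 := hJconv.2 (Set.mem_univ f) (Set.mem_univ flam)
        (by norm_num : (0:ℝ) ≤ 1/2) (by norm_num : (0:ℝ) ≤ 1/2) (by norm_num)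
      have heq : (1/2 : ℝ) • f + (1/2 : ℝ) • flam = (2 : ℝ)⁻¹ • (f + flam) := by
        rw [smul_add]; norm_num
      rw [heq] at h2
      simp only [smul_eq_mul] at h2
      linarith
    have hA : A ((2 : ℝ)⁻¹ • (f + flam)) - g
        = (2 : ℝ)⁻¹ • ((A f - g) + (A flam - g)) := by
      rw [map_smul, map_add]
      module
    have hnorm : ‖A ((2 : ℝ)⁻¹ • (f + flam)) - g‖ ^ 2
        = (‖A f - g‖ ^ 2 + b ^ 2) / 2 - ‖A f - A flam‖ ^ 2 / 4 := by
      have par := parallelogram_law_with_norm ℝ (A f - g) (A flam - g)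
      have hsub : A f - g - (A flam - g) = A f - A flam := by abel
      rw [hsub] at par
      rw [hA, norm_smul]
      have : ‖(2:ℝ)⁻¹‖ = (2:ℝ)⁻¹ := by
        rw [Real.norm_eq_abs]; norm_num
      rw [this, mul_pow]
      have h1 : ‖A f - g + (A flam - g)‖ ^ 2 + ‖A f - A flam‖ ^ 2
          = 2 * (‖A f - g‖ ^ 2 + b ^ 2) := by
        simpa [pow_two] using par
      norm_num
      linarith [h1]
    rw [hnorm] at hm
    have e1 : lam * d = lam * b ^ 2 - lam * τ ^ 2 := by rw [hddef]; ring
    linarith [hm, hJm, e1]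
  -- pointwise lower bound at μ
  have pw : ∀ f : F,
      J flam + lam * (b ^ 2 - τ ^ 2) + δ * |d| / 2
        ≤ J f + μ * (‖A f - g‖ ^ 2 - τ ^ 2) := by
    intro f
    set r : ℝ := ‖A f - A flam‖ with hrdef
    have hr0 : 0 ≤ r := norm_nonneg _
    set I : ℝ := inner ℝ (A flam - g) (A f - A flam) with hIdef
    have hexp : ‖A f - g‖ ^ 2 = b ^ 2 + 2 * I + r ^ 2 := by
      have : A f - g = (A flam - g) + (A f - A flam) := by abel
      rw [this, norm_add_sq_real]
    have hcs : |I| ≤ b * r := abs_real_inner_le_norm _ _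
    have hk := key f
    -- J f + μ * (‖A f - g‖^2 - τ^2) = J f + lam * (...) + s * (d + 2I + r^2)
    have hsplit : J f + μ * (‖A f - g‖ ^ 2 - τ ^ 2)
        = J f + lam * (‖A f - g‖ ^ 2 - τ ^ 2) + s * (d + 2 * I + r ^ 2) := by
      rw [hexp]; simp only [hμdef, hddef]; ring
    have hbound : s * (2 * I + r ^ 2) ≥ -(δ * (2 * (b * r) + r ^ 2)) := by
      have h1 : |s * (2 * I + r ^ 2)| ≤ δ * (2 * (b * r) + r ^ 2) := by
        rw [abs_mul, hs2]
        have : |2 * I + r ^ 2| ≤ 2 * (b * r) + r ^ 2 := by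
          calc |2 * I + r ^ 2| ≤ |2 * I| + |r ^ 2| := abs_add_le _ _
            _ ≤ 2 * (b * r) + r ^ 2 := by
                rw [abs_mul, abs_pow]
                simp only [abs_two]
                have : |r| = r := abs_of_nonneg hr0
                nlinarith [hcs]
        exact mul_le_mul_of_nonneg_left this hδpos.le
      linarith [neg_abs_le (s * (2 * I + r ^ 2))]
    -- quadratic estimate: (lam/2 - δ) r^2 - 2 δ b r + δ|d|/2 ≥ 0
    have hquad : (lam / 2 - δ) * r ^ 2 - δ * (2 * (b * r)) + δ * |d| / 2 ≥ 0 := by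
      have t1 : 0 ≤ (lam * r - 4 * δ * b) ^ 2 := sq_nonneg _
      have t2 : 0 ≤ lam * (lam / 4 - δ) * r ^ 2 :=
        mul_nonneg (mul_nonneg hlam.le (by linarith)) (sq_nonneg r)
      have t3 : 16 * δ * (δ * b ^ 2) ≤ 16 * δ * (lam * |d| / 8) :=
        mul_le_mul_of_nonneg_left hδ2 (by positivity)
      have h0 : 0 ≤ lam * ((lam / 2 - δ) * r ^ 2 - δ * (2 * (b * r)) + δ * |d| / 2) := by
        nlinarith [t1, t2, t3]
      have h0' := div_nonneg h0 hlam.le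
      rwa [mul_div_cancel_left₀ _ hlam.ne'] at h0'
    have hsd : s * (d + 2 * I + r ^ 2) = δ * |d| + s * (2 * I + r ^ 2) := by
      have hr : s * (d + 2 * I + r ^ 2) = s * d + s * (2 * I + r ^ 2) := by ring
      rw [hr, hs1]
    rw [hsplit, hsd]
    linarith [hk, hbound, hquad]
  -- D lam is attained at flam
  have hbdd : BddBelow (Set.range fun f : F => J f + lam * (‖A f - g‖ ^ 2 - τ ^ 2)) := by
    refine ⟨J flam + lam * (b ^ 2 - τ ^ 2), ?_⟩
    rintro x ⟨f, rfl⟩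
    exact hflam f
  have hDlam : D lam = J flam + lam * (b ^ 2 - τ ^ 2) := by
    rw [hD]
    exact le_antisymm (ciInf_le hbdd flam) (le_ciInf hflam)
  have hDμ : J flam + lam * (b ^ 2 - τ ^ 2) + δ * |d| / 2 ≤ D μ := by
    rw [hD]
    exact le_ciInf pw
  have hcontra := hmax μ hμpos
  rw [hDlam] at hcontra
  have hpos : 0 < δ * |d| := mul_pos hδpos habsd
  linarith [hDμ, hcontra, hpos]
end

section
/- Let F and G be real Hilbert spaces, A : F → G a bounded linear operator, g ∈ G, ε > 0, and J : F → ℝ convex, lower semicontinuous, and coercive, strictly convex along ker A. Let D(λ) = inf_{f ∈ F} [ J(f) + λ(‖A f − g‖² − ε) ]. If λ̄ > 0 and λ̄' > 0 both maximize D over (0, ∞), then the corresponding unique minimizers of the Lagrangian coincide: f_{λ̄} = f_{λ̄'}. -/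
/-- Midpoint identity for the data-fidelity term. -/
lemma lag_mid_norm {G : Type*} [NormedAddCommGroup G] [InnerProductSpace ℝ G] (x y : G) :
    ‖(2:ℝ)⁻¹ • (x + y)‖ ^ 2 = (‖x‖^2 + ‖y‖^2)/2 - ‖x - y‖^2/4 := by
  have h := parallelogram_law_with_norm ℝ x y
  rw [norm_smul]
  have : ‖(2:ℝ)⁻¹‖ = 2⁻¹ := by norm_num
  rw [this]; nlinarith [h]

lemma lag_mid_point {F G : Type*} [NormedAddCommGroup F] [InnerProductSpace ℝ F]
    [NormedAddCommGroup G] [InnerProductSpace ℝ G] (A : F →L[ℝ] G) (f f' : F) (g : G) :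
    A ((2:ℝ)⁻¹ • (f + f')) - g = (2:ℝ)⁻¹ • ((A f - g) + (A f' - g)) := by
  simp only [map_smul, map_add]; module

/-- Midpoint bound on `J`. -/
lemma lag_mid_J {F : Type*} [NormedAddCommGroup F] [InnerProductSpace ℝ F]
    {J : F → ℝ} (hJconv : ConvexOn ℝ Set.univ J) (f f' : F) :
    J ((2:ℝ)⁻¹ • (f + f')) ≤ (J f + J f')/2 := by
  have h := hJconv.2 (Set.mem_univ f) (Set.mem_univ f')
    (by norm_num : (0:ℝ) ≤ 1/2) (by norm_num : (0:ℝ) ≤ 1/2) (by norm_num)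
  have he : (2:ℝ)⁻¹ • (f + f') = (1/2:ℝ) • f + (1/2:ℝ) • f' := by module
  rw [he]
  simp only [smul_eq_mul] at h
  linarith

/-- Uniqueness of the minimizer of the Lagrangian at a fixed `λ > 0`. -/
lemma lagrangian_min_unique {F G : Type*} [NormedAddCommGroup F] [InnerProductSpace ℝ F]
    [NormedAddCommGroup G] [InnerProductSpace ℝ G]
    (A : F →L[ℝ] G) (g : G) (ε : ℝ) (J : F → ℝ)
    (hJconv : ConvexOn ℝ Set.univ J)
    (hJstrict : ∀ f f' : F, f ≠ f' → A (f - f') = 0 →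
      J ((2 : ℝ)⁻¹ • (f + f')) < (J f + J f') / 2)
    (lam : ℝ) (hlam : 0 < lam) (f f' : F)
    (hf : ∀ h : F, J f + lam * (‖A f - g‖ ^ 2 - ε) ≤ J h + lam * (‖A h - g‖ ^ 2 - ε))
    (hf' : ∀ h : F, J f' + lam * (‖A f' - g‖ ^ 2 - ε) ≤ J h + lam * (‖A h - g‖ ^ 2 - ε)) :
    f = f' := by
  by_contra hne
  have hval : J f + lam * (‖A f - g‖ ^ 2 - ε) = J f' + lam * (‖A f' - g‖ ^ 2 - ε) :=
    le_antisymm (hf f') (hf' f)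
  have hAh : A ((2:ℝ)⁻¹ • (f + f')) - g = (2:ℝ)⁻¹ • ((A f - g) + (A f' - g)) :=
    lag_mid_point A f f' g
  have hnorm : ‖A ((2:ℝ)⁻¹ • (f + f')) - g‖ ^ 2
      = (‖A f - g‖^2 + ‖A f' - g‖^2)/2 - ‖A f - A f'‖^2/4 := by
    rw [hAh, lag_mid_norm]
    have : (A f - g) - (A f' - g) = A f - A f' := by abel
    rw [this]
  have hJh : J ((2:ℝ)⁻¹ • (f + f')) ≤ (J f + J f')/2 := lag_mid_J hJconv f f'
  have hmin := hf ((2:ℝ)⁻¹ • (f + f'))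
  rw [hnorm] at hmin
  by_cases h0 : A (f - f') = 0
  · have hstr := hJstrict f f' hne h0
    have hsub : A f - A f' = 0 := by rw [← map_sub]; exact h0
    have hAeq : A f = A f' := sub_eq_zero.mp hsub
    rw [hsub] at hmin
    simp only [norm_zero] at hmin
    rw [hAeq] at hmin hval
    linarith
  · have hsub : A f - A f' ≠ 0 := by rw [← map_sub]; exact h0
    have hδ : 0 < ‖A f - A f'‖ ^ 2 := pow_pos (norm_pos_iff.mpr hsub) 2
    linarith [mul_pos hlam hδ]

/-- At a dual maximizer `λ > 0`, the minimizer of the Lagrangian has slack `≤ 0`: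
`‖A f_λ - g‖² ≤ ε`. -/
lemma slack_nonpos {F G : Type*} [NormedAddCommGroup F] [InnerProductSpace ℝ F]
    [NormedAddCommGroup G] [InnerProductSpace ℝ G]
    (A : F →L[ℝ] G) (g : G) (ε : ℝ) (hε : 0 < ε) (J : F → ℝ)
    (hJconv : ConvexOn ℝ Set.univ J)
    (D : ℝ → ℝ)
    (hD : ∀ lam : ℝ, D lam = ⨅ f : F, (J f + lam * (‖A f - g‖ ^ 2 - ε)))
    (lam : ℝ) (hlam : 0 < lam)
    (hmax : ∀ μ : ℝ, 0 < μ → D μ ≤ D lam)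
    (flam : F)
    (hflam : ∀ f : F,
      J flam + lam * (‖A flam - g‖ ^ 2 - ε) ≤ J f + lam * (‖A f - g‖ ^ 2 - ε)) :
    ‖A flam - g‖ ^ 2 ≤ ε := by
  have : Nonempty F := ⟨0⟩
  by_contra hcon
  push_neg at hcon
  set p : ℝ := ‖A flam - g‖ ^ 2 - ε with hpdef
  have hppos : 0 < p := by rw [hpdef]; linarith
  set m : ℝ := J flam + lam * p with hmdef
  have hm2 : m = J flam + lam * (‖A flam - g‖ ^ 2 - ε) := by rw [hmdef, hpdef]
  have hεp : 0 < ε + p := by linarith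
  set η : ℝ := lam * p ^ 2 / (32 * (ε + p)) with hηdef
  have hηpos : 0 < η := by
    rw [hηdef]
    exact div_pos (mul_pos hlam (pow_pos hppos 2)) (by linarith)
  set μ : ℝ := lam + η / (2 * ε) with hμdef
  have hslope : 0 < η / (2 * ε) := div_pos hηpos (by linarith)
  have hμpos : 0 < μ := by rw [hμdef]; linarith
  set c : ℝ := min (η/2) (η * p / (4 * ε)) with hcdef
  clear_value p m η μ c
  have hcpos : 0 < c := by
    rw [hcdef]
    exact lt_min (by linarith) (div_pos (mul_pos hηpos hppos) (by linarith))
  have key : ∀ f : F, m + c ≤ J f + μ * (‖A f - g‖ ^ 2 - ε) := by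
    intro f
    have ht0 : 0 ≤ (J f + lam * (‖A f - g‖ ^ 2 - ε)) - m := by
      have := hflam f; linarith [hm2]
    set t : ℝ := (J f + lam * (‖A f - g‖ ^ 2 - ε)) - m with htdef
    clear_value t
    have hexpand : J f + μ * (‖A f - g‖ ^ 2 - ε)
        = m + t + (η / (2*ε)) * (‖A f - g‖ ^ 2 - ε) := by
      rw [htdef, hμdef]; ring
    have h4a : c ≤ η/2 := by rw [hcdef]; exact min_le_left _ _
    have h4b : c ≤ η * p / (4*ε) := by rw [hcdef]; exact min_le_right _ _
    rcases le_or_gt η t with hη | hη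
    · -- far from the minimum: t ≥ η dominates
      have hs : -ε ≤ ‖A f - g‖ ^ 2 - ε := by nlinarith [sq_nonneg ‖A f - g‖]
      have h2 : (η / (2*ε)) * (-ε) ≤ (η / (2*ε)) * (‖A f - g‖ ^ 2 - ε) :=
        mul_le_mul_of_nonneg_left hs hslope.le
      have h3 : (η / (2*ε)) * (-ε) = -(η/2) := by field_simp
      rw [hexpand]; linarith
    · -- near the minimum: A f is close to A flam, so the slack stays ≥ p/2
      have hJh : J ((2:ℝ)⁻¹ • (f + flam)) ≤ (J f + J flam)/2 := lag_mid_J hJconv f flam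
      have hAh : A ((2:ℝ)⁻¹ • (f + flam)) - g = (2:ℝ)⁻¹ • ((A f - g) + (A flam - g)) :=
        lag_mid_point A f flam g
      have hnorm : ‖A ((2:ℝ)⁻¹ • (f + flam)) - g‖ ^ 2
          = (‖A f - g‖^2 + ‖A flam - g‖^2)/2 - ‖A f - A flam‖^2/4 := by
        rw [hAh, lag_mid_norm]
        have : (A f - g) - (A flam - g) = A f - A flam := by abel
        rw [this]
      have hmin := hflam ((2:ℝ)⁻¹ • (f + flam))
      rw [hnorm] at hmin
      have hd2 : lam * ‖A f - A flam‖ ^ 2 ≤ 2 * t := by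
        linarith [hmin, hJh, htdef, hm2]
      have hd2' : ‖A f - A flam‖ ^ 2 * lam ≤ 2 * η := by
        nlinarith [hd2, hη]
      have hy2 : ‖A flam - g‖ ^ 2 = ε + p := by rw [hpdef]; ring
      -- bound the cross term
      have hsq : (2 * (‖A flam - g‖ * ‖A f - A flam‖)) ^ 2 ≤ (p/2) ^ 2 := by
        have e1 : ‖A f - A flam‖^2 * lam * (4*(ε+p)) ≤ 2*η * (4*(ε+p)) :=
          mul_le_mul_of_nonneg_right hd2' (by linarith)
        have e2 : 2*η * (4*(ε+p)) = lam * (p^2/4) := by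
          rw [hηdef]; field_simp; ring
        have e3 : (2 * (‖A flam - g‖ * ‖A f - A flam‖)) ^ 2 * lam
            ≤ (p/2)^2 * lam := by
          calc (2 * (‖A flam - g‖ * ‖A f - A flam‖)) ^ 2 * lam
              = ‖A f - A flam‖^2 * lam * (4 * ‖A flam - g‖^2) := by ring
            _ = ‖A f - A flam‖^2 * lam * (4*(ε+p)) := by rw [hy2]
            _ ≤ 2*η * (4*(ε+p)) := e1
            _ = (p/2)^2 * lam := by rw [e2]; ring
        exact le_of_mul_le_mul_right e3 hlam
      have hyd : 2 * (‖A flam - g‖ * ‖A f - A flam‖) ≤ p/2 := by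
        have ha : (0:ℝ) ≤ 2 * (‖A flam - g‖ * ‖A f - A flam‖) := by positivity
        have hb : (0:ℝ) ≤ p/2 := by linarith
        have := Real.sqrt_le_sqrt hsq
        rwa [Real.sqrt_sq ha, Real.sqrt_sq hb] at this
      have hinner : ‖A f - g‖^2 = ‖A flam - g‖^2
          + 2 * inner ℝ (A flam - g) (A f - A flam) + ‖A f - A flam‖^2 := by
        have he : A f - g = (A flam - g) + (A f - A flam) := by abel
        rw [he, norm_add_sq_real]
      have habs : |(inner ℝ (A flam - g) (A f - A flam) : ℝ)|
          ≤ ‖A flam - g‖ * ‖A f - A flam‖ := abs_real_inner_le_norm _ _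
      have hni := neg_abs_le (inner ℝ (A flam - g) (A f - A flam) : ℝ)
      have hs : p/2 ≤ ‖A f - g‖ ^ 2 - ε := by
        rw [hy2] at hinner
        have := sq_nonneg ‖A f - A flam‖
        linarith
      have h2 : (η / (2*ε)) * (p/2) ≤ (η / (2*ε)) * (‖A f - g‖ ^ 2 - ε) :=
        mul_le_mul_of_nonneg_left hs hslope.le
      have h3 : (η / (2*ε)) * (p/2) = η * p / (4*ε) := by field_simp; ring
      rw [hexpand]; linarith
  -- contradiction with maximality
  have h1 : m + c ≤ D μ := by rw [hD μ]; exact le_ciInf key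
  have h2 : D lam ≤ m := by
    rw [hD lam]
    have hb : BddBelow (Set.range fun f : F => J f + lam * (‖A f - g‖ ^ 2 - ε)) := by
      refine ⟨m, ?_⟩; rintro x ⟨f, rfl⟩
      exact hflam f
    have := ciInf_le hb flam
    linarith [hm2]
  have h3 := hmax μ hμpos
  linarith

/-- uniqueness part of Theorem `estimation-lambda`. Under Assumption 1
and strict convexity of `J` along `ker A`: if `λ̄ > 0` and `λ̄' > 0` both maximize the
dual function `D` over `(0, ∞)`, then the corresponding unique minimizers of the
Lagrangian coincide: `f_λ̄ = f_λ̄'`. -/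
theorem dual_maximizers_same_primal
    {F G : Type*} [NormedAddCommGroup F] [InnerProductSpace ℝ F] [CompleteSpace F]
    [NormedAddCommGroup G] [InnerProductSpace ℝ G] [CompleteSpace G]
    (A : F →L[ℝ] G) (g : G) (ε : ℝ) (hε : 0 < ε) (J : F → ℝ)
    (hJconv : ConvexOn ℝ Set.univ J)
    (hJlsc : LowerSemicontinuous J)
    (hJcoer : Filter.Tendsto J (Filter.comap (fun f : F => ‖f‖) Filter.atTop) Filter.atTop)
    (hJstrict : ∀ f f' : F, f ≠ f' → A (f - f') = 0 →
      J ((2 : ℝ)⁻¹ • (f + f')) < (J f + J f') / 2)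
    (D : ℝ → ℝ)
    (hD : ∀ lam : ℝ, D lam = ⨅ f : F, (J f + lam * (‖A f - g‖ ^ 2 - ε)))
    (lam lam' : ℝ) (hlam : 0 < lam) (hlam' : 0 < lam')
    (hmax : ∀ μ : ℝ, 0 < μ → D μ ≤ D lam)
    (hmax' : ∀ μ : ℝ, 0 < μ → D μ ≤ D lam')
    (flam flam' : F)
    (hflam : ∀ f : F,
      J flam + lam * (‖A flam - g‖ ^ 2 - ε) ≤ J f + lam * (‖A f - g‖ ^ 2 - ε))
    (hflam' : ∀ f : F,
      J flam' + lam' * (‖A flam' - g‖ ^ 2 - ε) ≤ J f + lam' * (‖A f - g‖ ^ 2 - ε)) :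
    flam = flam' := by
  have hne : Nonempty F := ⟨0⟩
  -- slack signs at both maximizers
  have hp : ‖A flam - g‖ ^ 2 ≤ ε := slack_nonpos A g ε hε J hJconv D hD lam hlam hmax flam hflam
  have hq : ‖A flam' - g‖ ^ 2 ≤ ε :=
    slack_nonpos A g ε hε J hJconv D hD lam' hlam' hmax' flam' hflam'
  -- both attain the same dual value
  have hDeq : D lam = D lam' := le_antisymm (hmax' lam hlam) (hmax lam' hlam')
  have hDlam : D lam = J flam + lam * (‖A flam - g‖ ^ 2 - ε) := by
    rw [hD lam]
    refine le_antisymm ?_ (le_ciInf hflam)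
    exact ciInf_le ⟨_, by rintro x ⟨f, rfl⟩; exact hflam f⟩ flam
  have hDlam' : D lam' = J flam' + lam' * (‖A flam' - g‖ ^ 2 - ε) := by
    rw [hD lam']
    refine le_antisymm ?_ (le_ciInf hflam')
    exact ciInf_le ⟨_, by rintro x ⟨f, rfl⟩; exact hflam' f⟩ flam'
  have hm : J flam + lam * (‖A flam - g‖ ^ 2 - ε)
      = J flam' + lam' * (‖A flam' - g‖ ^ 2 - ε) := by
    rw [← hDlam, ← hDlam']; exact hDeq
  have hc1 := hflam flam'
  have hc2 := hflam' flam
  rcases lt_trichotomy lam lam' with hlt | heq | hgt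
  · -- lam < lam' : slack at lam must vanish, so flam also minimizes L(·, lam')
    have hd : 0 < lam' - lam := by linarith
    have h5 : 0 ≤ (lam' - lam) * (‖A flam - g‖ ^ 2 - ε) := by nlinarith [hc2, hm]
    have hP0' : 0 ≤ ‖A flam - g‖ ^ 2 - ε := by nlinarith [h5, hd]
    have hPz : ‖A flam - g‖ ^ 2 - ε = 0 := by linarith
    have hz : lam' * (‖A flam - g‖ ^ 2 - ε) = 0 := by rw [hPz, mul_zero]
    have hz2 : lam * (‖A flam - g‖ ^ 2 - ε) = 0 := by rw [hPz, mul_zero]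
    have hmin2 : ∀ f : F,
        J flam + lam' * (‖A flam - g‖ ^ 2 - ε) ≤ J f + lam' * (‖A f - g‖ ^ 2 - ε) := by
      intro f
      have h1 := hflam' f
      linarith
    exact lagrangian_min_unique A g ε J hJconv hJstrict lam' hlam' flam flam' hmin2 hflam'
  · -- lam = lam'
    subst heq
    exact lagrangian_min_unique A g ε J hJconv hJstrict lam hlam flam flam' hflam hflam'
  · -- lam' < lam : slack at lam' must vanish, so flam' also minimizes L(·, lam)
    have hd : 0 < lam - lam' := by linarith
    have h5 : 0 ≤ (lam - lam') * (‖A flam' - g‖ ^ 2 - ε) := by nlinarith [hc1, hm]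
    have hQ0' : 0 ≤ ‖A flam' - g‖ ^ 2 - ε := by nlinarith [h5, hd]
    have hQz : ‖A flam' - g‖ ^ 2 - ε = 0 := by linarith
    have hz : lam * (‖A flam' - g‖ ^ 2 - ε) = 0 := by rw [hQz, mul_zero]
    have hz2 : lam' * (‖A flam' - g‖ ^ 2 - ε) = 0 := by rw [hQz, mul_zero]
    have hmin2 : ∀ f : F,
        J flam' + lam * (‖A flam' - g‖ ^ 2 - ε) ≤ J f + lam * (‖A f - g‖ ^ 2 - ε) := by
      intro f
      have h1 := hflam f
      linarith
    exact lagrangian_min_unique A g ε J hJconv hJstrict lam hlam flam flam' hflam hmin2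
end

section
/- Let F and G be real Hilbert spaces, A : F → G a bounded linear operator with adjoint A*, g ∈ G, ε > 0, J : F → ℝ convex, and λ̄, λ̄' > 0. Let f̄ minimize L(·, λ̄) and f̄' minimize L(·, λ̄'), where L(f,λ) = J(f) + λ(‖A f − g‖² − ε), and suppose J(f̄) = J(f̄'). Then, from the two subgradient inequalities J(f̄') ≥ J(f̄) − ⟨2λ̄ A*(A f̄ − g), f̄' − f̄⟩ and J(f̄) ≥ J(f̄') − ⟨2λ̄' A*(A f̄' − g), f̄ − f̄'⟩, one obtains ‖A(f̄ − f̄')‖² ≤ 0, i.e. A f̄ = A f̄', so f̄ − f̄' ∈ ker A. -/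
/-- key step in the uniqueness proof of Theorem `estimation-lambda`.
For convex `J` and `λ̄, λ̄' > 0`, let `f̄` minimize `L(·, λ̄)` and `f̄'` minimize
`L(·, λ̄')`, and suppose `J f̄ = J f̄'`. Then, from the two subgradient inequalities
`J f̄' ≥ J f̄ − ⟪2λ̄ A*(A f̄ − g), f̄' − f̄⟫` and
`J f̄ ≥ J f̄' − ⟪2λ̄' A*(A f̄' − g), f̄ − f̄'⟫`, one obtains `‖A(f̄ − f̄')‖² ≤ 0`, i.e.
`A f̄ = A f̄'`, so `f̄ − f̄' ∈ ker A`. -/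
theorem lagrangian_minimizers_differ_in_kernel
    {F G : Type*} [NormedAddCommGroup F] [InnerProductSpace ℝ F] [CompleteSpace F]
    [NormedAddCommGroup G] [InnerProductSpace ℝ G] [CompleteSpace G]
    (A : F →L[ℝ] G) (g : G) (ε : ℝ) (hε : 0 < ε) (J : F → ℝ)
    (hJconv : ConvexOn ℝ Set.univ J)
    (lam lam' : ℝ) (hlam : 0 < lam) (hlam' : 0 < lam')
    (fbar fbar' : F)
    (hfbar : ∀ f : F,
      J fbar + lam * (‖A fbar - g‖ ^ 2 - ε) ≤ J f + lam * (‖A f - g‖ ^ 2 - ε))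
    (hfbar' : ∀ f : F,
      J fbar' + lam' * (‖A fbar' - g‖ ^ 2 - ε) ≤ J f + lam' * (‖A f - g‖ ^ 2 - ε))
    (hJeq : J fbar = J fbar') :
    ‖A (fbar - fbar')‖ ^ 2 ≤ 0 ∧ A fbar = A fbar' ∧ A (fbar - fbar') = 0 := by

  have h1 := hfbar fbar'
  have h2 := hfbar' fbar
  -- norms of residuals are equal
  have hU : ‖A fbar - g‖ ^ 2 ≤ ‖A fbar' - g‖ ^ 2 := by nlinarith
  have hV : ‖A fbar' - g‖ ^ 2 ≤ ‖A fbar - g‖ ^ 2 := by nlinarith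
  set u := A fbar - g with hu
  set v := A fbar' - g with hv
  have hmid := hfbar ((1/2:ℝ) • fbar + (1/2:ℝ) • fbar')
  have hJmid : J ((1/2:ℝ) • fbar + (1/2:ℝ) • fbar') ≤ (1/2) * J fbar + (1/2) * J fbar' :=
    hJconv.2 (Set.mem_univ fbar) (Set.mem_univ fbar') (by norm_num) (by norm_num) (by norm_num)
  have hA : A ((1/2:ℝ) • fbar + (1/2:ℝ) • fbar') - g = (1/2:ℝ) • (u + v) := by
    rw [map_add, map_smul, map_smul, hu, hv]; module
  have hnorm : ‖A ((1/2:ℝ) • fbar + (1/2:ℝ) • fbar') - g‖ ^ 2 = (1/4) * ‖u + v‖ ^ 2 := by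
    have h12 : ‖(1/2:ℝ)‖ = 1/2 := by norm_num
    rw [hA, norm_smul, h12]; ring
  have hpar : ‖u + v‖ ^ 2 + ‖u - v‖ ^ 2 = 2 * ‖u‖ ^ 2 + 2 * ‖v‖ ^ 2 := by
    have h1 := @norm_add_sq_real G _ _ u v
    have h2 := @norm_sub_sq_real G _ _ u v
    nlinarith
  have huv : u - v = A (fbar - fbar') := by rw [hu, hv, map_sub]; abel
  have key : ‖A (fbar - fbar')‖ ^ 2 ≤ 0 := by
    rw [← huv]; nlinarith
  have hz : A (fbar - fbar') = 0 := by
    have := sq_nonneg ‖A (fbar - fbar')‖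
    have : ‖A (fbar - fbar')‖ = 0 := by nlinarith
    exact norm_eq_zero.mp this
  refine ⟨key, ?_, hz⟩
  have := hz
  rw [map_sub, sub_eq_zero] at this
  exact this
end
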